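/- arXiv:2501.06621 — 5 statements merged into one kernel-verified Lean document; each statement's English description precedes it below -/
import Mathlib

section
/- Let K and M be invertible n×n complex matrices such that M⁻¹K is diagonalizable, let v̂_1,…,v̂_n be right eigenvectors and v̌_1,…,v̌_n left eigenvectors of the pencil (K,M), each family a basis of ℂⁿ, with common eigenvalues λ_1,…,λ_n ordered so that |1−λ_1| ≥ |1−λ_2| ≥ ⋯ ≥ |1−λ_n| and biorthonormalized so that v̌_i* M v̂_j = δ_ij. Fix n_c with 1 ≤ n_c < n, and let P_♯ be the n×n_c matrix whose columns are v̂_1,…,v̂_{n_c} and R_♯ the n_c×n matrix whose rows are v̌_1*,…,v̌_{n_c}*. Then R_♯ K P_♯ is invertible and the spectral radius of the two-grid error-propagation operator satisfies ρ(E_TG(P_♯, R_♯)) = |1 − λ_{n_c+1}|. -/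
open Matrix

/-- Spectral radius of a square complex matrix: the maximum modulus of its eigenvalues. -/
noncomputable def specRad {n : ℕ} (A : Matrix (Fin n) (Fin n) ℂ) : ℝ :=
  sSup ((fun z : ℂ => ‖z‖) '' spectrum ℂ A)

/-- Two-grid error-propagation operator `E_TG(P,R) = (I − P (RKP)⁻¹ R K)(I − M⁻¹ K)`. -/
noncomputable def ETG {n nc : ℕ} (K M : Matrix (Fin n) (Fin n) ℂ)
    (P : Matrix (Fin n) (Fin nc) ℂ) (R : Matrix (Fin nc) (Fin n) ℂ) :
    Matrix (Fin n) (Fin n) ℂ :=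
  (1 - P * (R * K * P)⁻¹ * R * K) * (1 - M⁻¹ * K)

lemma aux_mul_sub_right {m p q r : ℕ} (A : Matrix (Fin m) (Fin p) ℂ)
    (B : Matrix (Fin p) (Fin q) ℂ) (f : Fin r → Fin q) :
    A * B.submatrix id f = (A * B).submatrix id f := by
  ext i j; simp [mul_apply]

lemma aux_sub_mul_left {m p q r : ℕ} (A : Matrix (Fin m) (Fin p) ℂ)
    (B : Matrix (Fin p) (Fin q) ℂ) (f : Fin r → Fin m) :
    A.submatrix f id * B = (A * B).submatrix f id := by
  ext i j; simp [mul_apply]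

lemma aux_sub_mul_sub {m p q r s : ℕ} (A : Matrix (Fin m) (Fin p) ℂ)
    (B : Matrix (Fin p) (Fin q) ℂ) (f : Fin r → Fin m) (g : Fin s → Fin q) :
    A.submatrix f id * B.submatrix id g = (A * B).submatrix f g := by
  ext i j; simp [mul_apply]

lemma aux_diag_submatrix {m r : ℕ} (d : Fin m → ℂ) (f : Fin r → Fin m)
    (hf : Function.Injective f) :
    (diagonal d).submatrix f f = diagonal (fun j => d (f j)) := by
  ext i j
  by_cases h : i = j
  · subst h; simp
  · rw [submatrix_apply, diagonal_apply_ne _ (fun hc => h (hf hc)), diagonal_apply_ne _ h]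

lemma aux_isUnit_diagonal {m : ℕ} (d : Fin m → ℂ) (hd : ∀ i, d i ≠ 0) :
    IsUnit (diagonal d) := by
  rw [Matrix.isUnit_iff_isUnit_det, det_diagonal, isUnit_iff_ne_zero]
  exact Finset.prod_ne_zero_iff.mpr fun i _ => hd i

lemma aux_inv_diagonal {m : ℕ} (d : Fin m → ℂ) (hd : ∀ i, d i ≠ 0) :
    (diagonal d)⁻¹ = diagonal (fun i => (d i)⁻¹) := by
  refine Matrix.inv_eq_left_inv ?_
  rw [diagonal_mul_diagonal]
  rw [show (fun i => (d i)⁻¹ * d i) = fun _ => (1:ℂ) by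
    funext i; exact inv_mul_cancel₀ (hd i)]
  exact Matrix.diagonal_one

/-- Optimal two-grid convergence identity for a general nonsingular pencil `(K, M)`:
with interpolation spanned by the first `n_c` right eigenvectors and restriction by the
first `n_c` left eigenvectors (biorthonormalized via `M`), the coarse operator is
invertible and `ρ(E_TG(P♯, R♯)) = |1 − λ_{n_c+1}|`. -/
theorem optimal_two_grid_nonsymmetric
    {n : ℕ} (hn : 0 < n) (K M : Matrix (Fin n) (Fin n) ℂ)
    (hK : IsUnit K) (hM : IsUnit M)
    (vhat vcheck : Fin n → (Fin n → ℂ)) (lam : Fin n → ℂ)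
    (hright : ∀ i, K *ᵥ vhat i = lam i • (M *ᵥ vhat i))
    (hleft : ∀ i, (star (vcheck i)) ᵥ* K = lam i • ((star (vcheck i)) ᵥ* M))
    (hbasis_r : LinearIndependent ℂ vhat)
    (hbasis_l : LinearIndependent ℂ vcheck)
    (horder : Antitone fun i => ‖1 - lam i‖)
    (hbio : ∀ i j, star (vcheck i) ⬝ᵥ (M *ᵥ vhat j) = if i = j then 1 else 0)
    (nc : ℕ) (hnc1 : 1 ≤ nc) (hncn : nc < n)
    (Psharp : Matrix (Fin n) (Fin nc) ℂ) (Rsharp : Matrix (Fin nc) (Fin n) ℂ)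
    (hP : ∀ i j, Psharp i j = vhat (Fin.castLE hncn.le j) i)
    (hR : ∀ j i, Rsharp j i = star (vcheck (Fin.castLE hncn.le j) i)) :
    IsUnit (Rsharp * K * Psharp) ∧
      specRad (ETG K M Psharp Rsharp) = ‖1 - lam ⟨nc, hncn⟩‖ := by
  have hMdet : IsUnit M.det := (Matrix.isUnit_iff_isUnit_det M).mp hM
  have hKdet : IsUnit K.det := (Matrix.isUnit_iff_isUnit_det K).mp hK
  set f : Fin nc → Fin n := Fin.castLE hncn.le with hf
  have hfinj : Function.Injective f := Fin.castLE_injective _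
  -- eigenvalues are nonzero
  have hlam_ne : ∀ i, lam i ≠ 0 := by
    intro i h0
    have h1 : K *ᵥ vhat i = 0 := by rw [hright i, h0, zero_smul]
    have h2 : vhat i = 0 := by
      have := congrArg (fun w => K⁻¹ *ᵥ w) h1
      simpa [Matrix.mulVec_mulVec, Matrix.nonsing_inv_mul K hKdet] using this
    exact hbasis_r.ne_zero i h2
  -- matrices of eigenvectors
  set V : Matrix (Fin n) (Fin n) ℂ := Matrix.of fun i j => vhat j i with hV
  set W : Matrix (Fin n) (Fin n) ℂ := Matrix.of fun i j => star (vcheck i j) with hW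
  have hWMV : W * (M * V) = 1 := by
    ext i j
    have h := hbio i j
    simp only [dotProduct, mulVec, Pi.star_apply] at h
    simp only [mul_apply, hV, hW, Matrix.of_apply, Matrix.one_apply]
    exact h
  have hWMV' : (W * M) * V = 1 := by rw [Matrix.mul_assoc]; exact hWMV
  have hVunit : IsUnit V := (Matrix.isUnit_iff_isUnit_det V).mpr (Matrix.isUnit_det_of_left_inverse hWMV')
  have hVdet : IsUnit V.det := (Matrix.isUnit_iff_isUnit_det V).mp hVunit
  have hVinv : V⁻¹ = W * M := Matrix.inv_eq_left_inv hWMV'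
  -- K V = M V Λ
  have hKVeq : K * V = M * (V * diagonal lam) := by
    ext a j
    have h := congrFun (hright j) a
    simp only [mulVec, dotProduct, Pi.smul_apply, smul_eq_mul] at h
    have hVD : ∀ b, (V * diagonal lam) b j = vhat j b * lam j := fun b => by
      rw [Matrix.mul_diagonal]; rfl
    rw [mul_apply, mul_apply]
    simp only [hVD, hV, Matrix.of_apply]
    rw [h, Finset.mul_sum]
    exact Finset.sum_congr rfl fun b _ => by rw [← hV, hVD]; ring
  -- W (K V) = Λ
  have hWKV : W * (K * V) = diagonal lam := by
    rw [hKVeq, ← Matrix.mul_assoc M V, ← Matrix.mul_assoc W, hWMV, Matrix.one_mul]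
  -- M⁻¹ K = V Λ V⁻¹
  have hMK : M⁻¹ * K = V * diagonal lam * V⁻¹ := by
    have h1 : M⁻¹ * (K * V) = V * diagonal lam := by
      rw [hKVeq, ← Matrix.mul_assoc, Matrix.nonsing_inv_mul M hMdet, Matrix.one_mul]
    calc M⁻¹ * K = M⁻¹ * K * (V * V⁻¹) := by
          rw [Matrix.mul_nonsing_inv V hVdet, Matrix.mul_one]
      _ = (M⁻¹ * (K * V)) * V⁻¹ := by rw [← Matrix.mul_assoc, ← Matrix.mul_assoc]
      _ = V * diagonal lam * V⁻¹ := by rw [h1]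
  -- P, R as submatrices
  have hPsub : Psharp = V.submatrix id f := by
    ext i j; simp [hP i j, hV]
  have hRsub : Rsharp = W.submatrix f id := by
    ext j i; simp [hR j i, hW]
  -- coarse matrix
  have hRKV : Rsharp * (K * V) = (diagonal lam).submatrix f id := by
    rw [hRsub, aux_sub_mul_left, hWKV]
  have hRKP : Rsharp * K * Psharp = diagonal (fun j => lam (f j)) := by
    rw [Matrix.mul_assoc, hPsub, aux_mul_sub_right, hRsub, aux_sub_mul_sub, hWKV,
      aux_diag_submatrix lam f hfinj]
  have hRKPunit : IsUnit (Rsharp * K * Psharp) := by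
    rw [hRKP]; exact aux_isUnit_diagonal _ fun j => hlam_ne (f j)
  refine ⟨hRKPunit, ?_⟩
  -- the coarse correction applied to V
  set e : Fin n → ℂ := fun j => if (j : ℕ) < nc then 1 else 0 with he
  have hmid : (diagonal fun j => lam (f j)) ⁻¹ * (diagonal lam).submatrix f id
      = Matrix.of fun (a : Fin nc) (j : Fin n) => if f a = j then (1:ℂ) else 0 := by
    rw [aux_inv_diagonal _ (fun j => hlam_ne (f j))]
    ext a j
    rw [Matrix.diagonal_mul, submatrix_apply, Matrix.of_apply]
    simp only [id_eq]
    rcases eq_or_ne (f a) j with h | h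
    · rw [if_pos h, h, diagonal_apply_eq]
      exact inv_mul_cancel₀ (hlam_ne j)
    · rw [diagonal_apply_ne _ h, if_neg h, mul_zero]
  have hproj : V.submatrix id f * (Matrix.of fun (a : Fin nc) (j : Fin n) =>
      if f a = j then (1:ℂ) else 0) = V * diagonal e := by
    ext i j
    rw [mul_apply, Matrix.mul_diagonal]
    by_cases hj : (j : ℕ) < nc
    · have hfj : f ⟨(j : ℕ), hj⟩ = j := by
        apply Fin.ext; simp [hf]
      rw [Finset.sum_eq_single (⟨(j : ℕ), hj⟩ : Fin nc)]
      · rw [Matrix.of_apply, if_pos hfj, mul_one, submatrix_apply, hfj, he]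
        simp [hj]
      · intro b _ hb
        rw [Matrix.of_apply, if_neg, mul_zero]
        exact fun hc => hb (hfinj (by rw [hc, hfj]))
      · intro hmem; exact absurd (Finset.mem_univ _) hmem
    · rw [Finset.sum_eq_zero, he]
      · simp [hj]
      · intro b _
        rw [Matrix.of_apply, if_neg, mul_zero]
        intro hc
        apply hj
        rw [← hc]
        exact b.isLt
  have hCV : Psharp * (Rsharp * K * Psharp)⁻¹ * Rsharp * K * V = V * diagonal e := by
    rw [Matrix.mul_assoc _ K V, Matrix.mul_assoc _ Rsharp (K * V), hRKV, hRKP,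
      hPsub, Matrix.mul_assoc (V.submatrix id f), hmid, hproj]
  -- diagonal form of the error propagator
  set d : Fin n → ℂ := fun j => if (j : ℕ) < nc then 0 else 1 - lam j with hd
  have hsmooth : (1 - M⁻¹ * K) * V = V * diagonal (fun j => 1 - lam j) := by
    rw [Matrix.sub_mul, Matrix.one_mul, hMK, Matrix.mul_assoc _ V⁻¹ V,
      Matrix.nonsing_inv_mul V hVdet, Matrix.mul_one]
    rw [show (diagonal fun j => 1 - lam j) = 1 - diagonal lam by
      rw [← Matrix.diagonal_one, diagonal_sub]]
    rw [Matrix.mul_sub, Matrix.mul_one]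
  have hETGV : ETG K M Psharp Rsharp * V = V * diagonal d := by
    rw [ETG, Matrix.mul_assoc, hsmooth, ← Matrix.mul_assoc, Matrix.sub_mul, Matrix.one_mul,
      hCV]
    rw [show V - V * diagonal e = V * (1 - diagonal e) by rw [Matrix.mul_sub, Matrix.mul_one]]
    rw [show (1 : Matrix (Fin n) (Fin n) ℂ) - diagonal e = diagonal (fun j => 1 - e j) by
      rw [← Matrix.diagonal_one, diagonal_sub]]
    rw [Matrix.mul_assoc, diagonal_mul_diagonal]
    congr 1
    ext j k
    rcases eq_or_ne j k with h | h
    · subst h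
      by_cases hj : (j : ℕ) < nc <;> simp [diagonal_apply_eq, hj, hd, he]
    · simp [diagonal_apply_ne _ h]
  have hETG : ETG K M Psharp Rsharp = V * diagonal d * V⁻¹ := by
    calc ETG K M Psharp Rsharp
        = ETG K M Psharp Rsharp * (V * V⁻¹) := by
          rw [Matrix.mul_nonsing_inv V hVdet, Matrix.mul_one]
      _ = (ETG K M Psharp Rsharp * V) * V⁻¹ := by rw [Matrix.mul_assoc]
      _ = V * diagonal d * V⁻¹ := by rw [hETGV]
  -- spectrum
  have hspec : spectrum ℂ (ETG K M Psharp Rsharp) = Set.range d := by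
    rw [hETG]
    rw [show V * diagonal d * V⁻¹
        = (hVunit.unit : Matrix (Fin n) (Fin n) ℂ) * diagonal d * ↑hVunit.unit⁻¹ by
      rw [Matrix.coe_units_inv, IsUnit.unit_spec]]
    rw [spectrum.units_conjugate, spectrum_diagonal]
  have habs : ∀ j, ‖d j‖ ≤ ‖1 - lam ⟨nc, hncn⟩‖ := by
    intro j
    by_cases hj : (j : ℕ) < nc
    · rw [hd]
      simp only [hj, if_true]
      rw [norm_zero]
      exact norm_nonneg _
    · have hle : (⟨nc, hncn⟩ : Fin n) ≤ j := by
        rw [Fin.le_def]; exact le_of_not_gt hj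
      have := horder hle
      rw [hd]
      simpa [hj] using this
  have hgt : IsGreatest ((fun z : ℂ => ‖z‖) '' spectrum ℂ (ETG K M Psharp Rsharp))
      (‖1 - lam ⟨nc, hncn⟩‖) := by
    rw [hspec]
    constructor
    · refine ⟨d ⟨nc, hncn⟩, ⟨⟨nc, hncn⟩, rfl⟩, ?_⟩
      rw [hd]; simp
    · rintro x ⟨z, ⟨j, rfl⟩, rfl⟩
      exact habs j
  exact hgt.csSup_eq
end

section
/- Let K and M be invertible real symmetric n×n matrices such that M⁻¹K is diagonalizable over ℂ, with eigenvectors v_1,…,v_n forming a basis of ℂⁿ and satisfying K v_i = λ_i M v_i, the eigenvalues ordered so that |1−λ_1| ≥ |1−λ_2| ≥ ⋯ ≥ |1−λ_n|, and normalized so that v_iᵀ M v_j = δ_ij (plain transpose, no conjugation). Fix n_c with 1 ≤ n_c < n and assume the coarse space is closed under complex conjugation: for each i ≤ n_c the entrywise complex conjugate of v_i lies in span{v_1,…,v_{n_c}}. Let P_♯ be the n×n_c matrix whose columns are v_1,…,v_{n_c} and set R_♯ = P_♯* (conjugate transpose). Then R_♯ K P_♯ is invertible and the spectral radius of the two-grid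 error-propagation operator satisfies ρ(E_TG(P_♯, R_♯)) = |1 − λ_{n_c+1}|. -/
open Matrix

/-- A real matrix regarded as a complex matrix via `ℝ ⊆ ℂ`. -/
def toC {n : ℕ} (A : Matrix (Fin n) (Fin n) ℝ) : Matrix (Fin n) (Fin n) ℂ :=
  A.map (fun x => (x : ℂ))

/-- Optimal two-grid convergence identity for a real symmetric (possibly indefinite)
pencil `(K, M)`: with `P♯` spanned by the first `n_c` eigenvectors (with the coarse
space closed under complex conjugation) and `R♯ = P♯*`, the coarse operator is
invertible and `ρ(E_TG(P♯, R♯)) = |1 − λ_{n_c+1}|`. -/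
theorem optimal_two_grid_symmetric
    {n : ℕ} (hn : 0 < n) (Kr Mr : Matrix (Fin n) (Fin n) ℝ)
    (hKsymm : Kr.IsSymm) (hMsymm : Mr.IsSymm)
    (hK : IsUnit (toC Kr)) (hM : IsUnit (toC Mr))
    (v : Fin n → (Fin n → ℂ)) (lam : Fin n → ℂ)
    (heig : ∀ i, (toC Kr) *ᵥ v i = lam i • ((toC Mr) *ᵥ v i))
    (hbasis : LinearIndependent ℂ v)
    (horder : Antitone fun i => ‖1 - lam i‖)
    (hnorm : ∀ i j, v i ⬝ᵥ ((toC Mr) *ᵥ v j) = if i = j then 1 else 0)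
    (nc : ℕ) (hnc1 : 1 ≤ nc) (hncn : nc < n)
    (hconj : ∀ i : Fin n, (i : ℕ) < nc →
      star (v i) ∈ Submodule.span ℂ {w : Fin n → ℂ | ∃ j : Fin n, (j : ℕ) < nc ∧ w = v j})
    (Psharp : Matrix (Fin n) (Fin nc) ℂ)
    (hP : ∀ i j, Psharp i j = v (Fin.castLE hncn.le j) i) :
    IsUnit (Psharpᴴ * (toC Kr) * Psharp) ∧
      specRad (ETG (toC Kr) (toC Mr) Psharp Psharpᴴ) = ‖1 - lam ⟨nc, hncn⟩‖ := by
  classical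
  set Kc := toC Kr with hKcdef
  set Mc := toC Mr with hMcdef
  -- basic symmetry facts
  have hMcT : Mcᵀ = Mc := by
    ext i j
    simp only [hMcdef, toC, transpose_apply, map_apply]
    exact congrArg Complex.ofReal (hMsymm.apply i j)
  have hvm : ∀ x : Fin n → ℂ, x ᵥ* Mc = Mc *ᵥ x := by
    intro x
    have h := Matrix.vecMul_transpose (A := Mc) (x := x)
    rw [hMcT] at h
    exact h
  have hMsw : ∀ x y : Fin n → ℂ, x ⬝ᵥ Mc *ᵥ y = y ⬝ᵥ Mc *ᵥ x := by
    intro x y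
    rw [Matrix.dotProduct_mulVec, hvm, dotProduct_comm]
  have hvne : ∀ i, v i ≠ 0 := fun i => hbasis.ne_zero i
  have hKdet : IsUnit Kc.det := (Matrix.isUnit_iff_isUnit_det _).mp hK
  have hMdet : IsUnit Mc.det := (Matrix.isUnit_iff_isUnit_det _).mp hM
  have hlam : ∀ i, lam i ≠ 0 := by
    intro i h0
    apply hvne i
    have h1 : Kc *ᵥ v i = 0 := by rw [heig i, h0, zero_smul]
    have h2 := congrArg (fun w => Kc⁻¹ *ᵥ w) h1
    simpa [Matrix.mulVec_mulVec, Matrix.nonsing_inv_mul _ hKdet] using h2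
  -- orthogonality of coarse conjugates against fine eigenvectors
  have horth : ∀ (k : Fin n), (k : ℕ) < nc → ∀ (j : Fin n), nc ≤ (j : ℕ) →
      star (v k) ⬝ᵥ Mc *ᵥ v j = 0 := by
    intro k hk j hj
    refine Submodule.span_induction (p := fun w _ => w ⬝ᵥ Mc *ᵥ v j = 0)
      ?_ ?_ ?_ ?_ (hconj k hk)
    · rintro w ⟨l, hl, rfl⟩
      rw [hnorm l j, if_neg (by rintro rfl; omega)]
    · simp
    · intro x y _ _ hx hy
      simp [add_dotProduct, hx, hy]
    · intro a x _ hx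
      simp [smul_dotProduct, hx]
  -- expansion of coarse-span elements in the eigenbasis
  have hexp : ∀ w ∈ Submodule.span ℂ {w : Fin n → ℂ | ∃ j : Fin n, (j : ℕ) < nc ∧ w = v j},
      ∑ l : Fin nc, (v (Fin.castLE hncn.le l) ⬝ᵥ Mc *ᵥ w) • v (Fin.castLE hncn.le l) = w := by
    intro w hw
    refine Submodule.span_induction
      (p := fun w _ => ∑ l : Fin nc,
        (v (Fin.castLE hncn.le l) ⬝ᵥ Mc *ᵥ w) • v (Fin.castLE hncn.le l) = w)
      ?_ ?_ ?_ ?_ hw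
    · rintro w ⟨i, hi, rfl⟩
      have hval : ∀ l : Fin nc, (Fin.castLE hncn.le l = i) ↔ l = ⟨(i : ℕ), hi⟩ := by
        intro l
        constructor
        · intro h; exact Fin.ext (by simpa using congrArg Fin.val h)
        · rintro rfl; exact Fin.ext rfl
      calc ∑ l : Fin nc, (v (Fin.castLE hncn.le l) ⬝ᵥ Mc *ᵥ v i) • v (Fin.castLE hncn.le l)
          = ∑ l : Fin nc, (if l = ⟨(i : ℕ), hi⟩ then (1 : ℂ) else 0) • v (Fin.castLE hncn.le l) := by
            refine Finset.sum_congr rfl fun l _ => ?_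
            rw [hnorm]
            simp only [hval l]
        _ = v i := by
            simp only [ite_smul, one_smul, zero_smul]
            rw [Finset.sum_ite_eq' Finset.univ (⟨(i : ℕ), hi⟩ : Fin nc)
              (fun l => v (Fin.castLE hncn.le l)), if_pos (Finset.mem_univ _)]
            exact congrArg v (Fin.ext rfl)
    · simp
    · intro x y _ _ hx hy
      simp only [Matrix.mulVec_add, dotProduct_add, add_smul, Finset.sum_add_distrib, hx, hy]
    · intro a x _ hx
      simp only [Matrix.mulVec_smul, dotProduct_smul, smul_eq_mul, mul_smul, ← Finset.smul_sum, hx]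
  have hlisub : LinearIndependent ℂ (fun l : Fin nc => v (Fin.castLE hncn.le l)) :=
    hbasis.comp _ (Fin.castLE_injective _)
  -- the Gram-type coarse matrix
  set G : Matrix (Fin nc) (Fin nc) ℂ :=
    Matrix.of (fun k j => star (v (Fin.castLE hncn.le k)) ⬝ᵥ Mc *ᵥ v (Fin.castLE hncn.le j))
    with hGdef
  have hstarexp : ∀ k : Fin nc, star (v (Fin.castLE hncn.le k)) =
      ∑ l : Fin nc, G k l • v (Fin.castLE hncn.le l) := by
    intro k
    have hmem := hconj (Fin.castLE hncn.le k) (by simpa using k.isLt)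
    have h := hexp _ hmem
    rw [← h]
    refine Finset.sum_congr rfl fun l _ => ?_
    rw [hMsw]
    rfl
  have hGinv : G.map star * G = 1 := by
    ext k m
    have hexp2 : v (Fin.castLE hncn.le k) =
        ∑ m : Fin nc, (∑ l : Fin nc, star (G k l) * G l m) • v (Fin.castLE hncn.le m) := by
      calc v (Fin.castLE hncn.le k)
          = star (star (v (Fin.castLE hncn.le k))) := (star_star _).symm
        _ = star (∑ l : Fin nc, G k l • v (Fin.castLE hncn.le l)) := by rw [hstarexp k]
        _ = ∑ l : Fin nc, star (G k l) • star (v (Fin.castLE hncn.le l)) := by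
            rw [star_sum]
            exact Finset.sum_congr rfl fun l _ => star_smul _ _
        _ = ∑ l : Fin nc, star (G k l) • ∑ m : Fin nc, G l m • v (Fin.castLE hncn.le m) := by
            exact Finset.sum_congr rfl fun l _ => by rw [hstarexp l]
        _ = ∑ l : Fin nc, ∑ m : Fin nc,
              (star (G k l) * G l m) • v (Fin.castLE hncn.le m) := by
            refine Finset.sum_congr rfl fun l _ => ?_
            rw [Finset.smul_sum]
            exact Finset.sum_congr rfl fun m _ => by rw [smul_smul]
        _ = ∑ m : Fin nc, (∑ l : Fin nc, star (G k l) * G l m) • v (Fin.castLE hncn.le m) := by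
            rw [Finset.sum_comm]
            exact Finset.sum_congr rfl fun m _ => by rw [Finset.sum_smul]
    have key : ∀ m : Fin nc,
        (∑ l : Fin nc, star (G k l) * G l m) - (if m = k then 1 else 0) = 0 := by
      have hg : ∑ m : Fin nc,
          ((∑ l : Fin nc, star (G k l) * G l m) - (if m = k then 1 else 0)) •
            v (Fin.castLE hncn.le m) = 0 := by
        simp only [sub_smul, ite_smul, one_smul, zero_smul, Finset.sum_sub_distrib]
        rw [← hexp2, Finset.sum_ite_eq' Finset.univ k (fun m => v (Fin.castLE hncn.le m)),
          if_pos (Finset.mem_univ _), sub_self]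
      exact Fintype.linearIndependent_iff.mp hlisub _ hg
    have hkm := key m
    rw [sub_eq_zero] at hkm
    simp only [Matrix.mul_apply, Matrix.map_apply, Matrix.one_apply]
    rw [hkm]
    simp [eq_comm]
  have hGunit : IsUnit G := by
    letI := invertibleOfLeftInverse _ _ hGinv
    exact isUnit_of_invertible G
  -- identification of the coarse operator
  have hentry : ∀ (k j : Fin nc), (Psharpᴴ * Kc * Psharp) k j =
      star (v (Fin.castLE hncn.le k)) ⬝ᵥ (Kc *ᵥ v (Fin.castLE hncn.le j)) := by
    intro k j
    rw [Matrix.mul_assoc, Matrix.mul_apply]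
    refine Finset.sum_congr rfl fun a _ => ?_
    rw [Matrix.conjTranspose_apply, hP]
    congr 1
    rw [Matrix.mul_apply]
    simp only [Matrix.mulVec, dotProduct]
    exact Finset.sum_congr rfl fun b _ => by rw [hP]
  have hRKPeq : Psharpᴴ * Kc * Psharp =
      G * Matrix.diagonal (fun j : Fin nc => lam (Fin.castLE hncn.le j)) := by
    ext k j
    rw [hentry, heig, Matrix.mul_diagonal]
    rw [dotProduct_smul]
    simp only [hGdef, Matrix.of_apply, smul_eq_mul]
    ring
  have hDunit : IsUnit (Matrix.diagonal (fun j : Fin nc => lam (Fin.castLE hncn.le j))) := by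
    have hmul : Matrix.diagonal (fun j : Fin nc => lam (Fin.castLE hncn.le j)) *
        Matrix.diagonal (fun j : Fin nc => (lam (Fin.castLE hncn.le j))⁻¹) = 1 := by
      rw [Matrix.diagonal_mul_diagonal]
      have hfun : (fun i : Fin nc => lam (Fin.castLE hncn.le i) * (lam (Fin.castLE hncn.le i))⁻¹)
          = fun _ => (1 : ℂ) := funext fun i => mul_inv_cancel₀ (hlam _)
      rw [hfun, Matrix.diagonal_one]
    letI := invertibleOfRightInverse _ _ hmul
    exact isUnit_of_invertible _
  have hRKPunit : IsUnit (Psharpᴴ * Kc * Psharp) := by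
    rw [hRKPeq]; exact hGunit.mul hDunit
  have hRKPdet : IsUnit (Psharpᴴ * Kc * Psharp).det :=
    (Matrix.isUnit_iff_isUnit_det _).mp hRKPunit
  -- action of the conjugate-transpose restriction
  have hPH : ∀ (w : Fin n → ℂ) (k : Fin nc),
      (Psharpᴴ *ᵥ w) k = star (v (Fin.castLE hncn.le k)) ⬝ᵥ w := by
    intro w k
    simp only [Matrix.mulVec, dotProduct, Matrix.conjTranspose_apply, Pi.star_apply]
    exact Finset.sum_congr rfl fun a _ => by rw [hP]
  have hRKzero : ∀ j : Fin n, nc ≤ (j : ℕ) → (Psharpᴴ * Kc) *ᵥ v j = 0 := by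
    intro j hj
    ext k
    rw [← Matrix.mulVec_mulVec, hPH, heig j, dotProduct_smul,
      horth (Fin.castLE hncn.le k) (by simpa using k.isLt) j hj, smul_zero]
    rfl
  have hPcol : ∀ l : Fin nc, Psharp *ᵥ Pi.single l 1 = v (Fin.castLE hncn.le l) := by
    intro l
    ext i
    rw [Matrix.mulVec_single]
    simp [hP]
  have hProj : ∀ j : Fin n, (j : ℕ) < nc →
      (Psharp * (Psharpᴴ * Kc * Psharp)⁻¹ * Psharpᴴ * Kc) *ᵥ v j = v j := by
    intro j hj
    have hcast : Fin.castLE hncn.le (⟨(j : ℕ), hj⟩ : Fin nc) = j := Fin.ext rfl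
    have hv : v j = Psharp *ᵥ Pi.single (⟨(j : ℕ), hj⟩ : Fin nc) 1 := by rw [hPcol, hcast]
    have hA : Psharp * (Psharpᴴ * Kc * Psharp)⁻¹ * Psharpᴴ * Kc * Psharp = Psharp := by
      rw [Matrix.mul_assoc (Psharp * (Psharpᴴ * Kc * Psharp)⁻¹ * Psharpᴴ) Kc Psharp,
        Matrix.mul_assoc (Psharp * (Psharpᴴ * Kc * Psharp)⁻¹) Psharpᴴ (Kc * Psharp),
        ← Matrix.mul_assoc Psharpᴴ Kc Psharp,
        Matrix.mul_assoc Psharp (Psharpᴴ * Kc * Psharp)⁻¹ (Psharpᴴ * Kc * Psharp),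
        Matrix.nonsing_inv_mul _ hRKPdet, Matrix.mul_one]
    conv_lhs => rw [hv]
    rw [Matrix.mulVec_mulVec, hA, hv]
  -- diagonal action of the error propagator
  set d : Fin n → ℂ := fun i => if (i : ℕ) < nc then 0 else 1 - lam i with hd
  have hEact : ∀ j : Fin n, ETG Kc Mc Psharp Psharpᴴ *ᵥ v j = d j • v j := by
    intro j
    unfold ETG
    rw [← Matrix.mulVec_mulVec]
    have hsm : (1 - Mc⁻¹ * Kc) *ᵥ v j = (1 - lam j) • v j := by
      rw [Matrix.sub_mulVec, Matrix.one_mulVec, ← Matrix.mulVec_mulVec, heig j,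
        Matrix.mulVec_smul, Matrix.mulVec_mulVec, Matrix.nonsing_inv_mul _ hMdet,
        Matrix.one_mulVec, sub_smul, one_smul]
    rw [hsm, Matrix.mulVec_smul, Matrix.sub_mulVec, Matrix.one_mulVec]
    by_cases hj : (j : ℕ) < nc
    · rw [hProj j hj, sub_self, smul_zero]
      simp [hd, hj]
    · have h0 : (Psharp * (Psharpᴴ * Kc * Psharp)⁻¹ * Psharpᴴ * Kc) *ᵥ v j = 0 := by
        rw [Matrix.mul_assoc (Psharp * (Psharpᴴ * Kc * Psharp)⁻¹) Psharpᴴ Kc,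
          ← Matrix.mulVec_mulVec, hRKzero j (le_of_not_gt hj), Matrix.mulVec_zero]
      rw [h0, sub_zero]
      simp [hd, hj]
  -- the eigenvector matrix
  set V : Matrix (Fin n) (Fin n) ℂ := Matrix.of (fun i j => v j i) with hVdef
  have hVleft : (Vᵀ * Mc) * V = 1 := by
    ext i j
    rw [Matrix.mul_assoc, Matrix.mul_apply, Matrix.one_apply]
    calc ∑ a, Vᵀ i a * (Mc * V) a j
        = v i ⬝ᵥ (Mc *ᵥ v j) := by
          refine Finset.sum_congr rfl fun a _ => ?_
          rw [Matrix.transpose_apply, Matrix.mul_apply]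
          simp only [Matrix.mulVec, dotProduct, hVdef, Matrix.of_apply]
      _ = if i = j then 1 else 0 := hnorm i j
  have hVunit : IsUnit V := by
    letI := invertibleOfLeftInverse _ _ hVleft
    exact isUnit_of_invertible V
  have hVdet : IsUnit V.det := (Matrix.isUnit_iff_isUnit_det _).mp hVunit
  have hEV : ETG Kc Mc Psharp Psharpᴴ * V = V * Matrix.diagonal d := by
    ext i j
    rw [Matrix.mul_apply, Matrix.mul_diagonal]
    have h := congrFun (hEact j) i
    simp only [Matrix.mulVec, dotProduct, Pi.smul_apply, smul_eq_mul] at h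
    calc ∑ a, ETG Kc Mc Psharp Psharpᴴ i a * V a j
        = d j * v j i := by
          rw [← h]
          exact Finset.sum_congr rfl fun a _ => by rw [hVdef]; rfl
      _ = V i j * d j := by rw [hVdef]; exact mul_comm _ _
  have hEdiag : ETG Kc Mc Psharp Psharpᴴ = V * Matrix.diagonal d * V⁻¹ := by
    have h2 : V * V⁻¹ = 1 := Matrix.mul_nonsing_inv _ hVdet
    calc ETG Kc Mc Psharp Psharpᴴ
        = ETG Kc Mc Psharp Psharpᴴ * (V * V⁻¹) := by rw [h2, Matrix.mul_one]
      _ = (ETG Kc Mc Psharp Psharpᴴ * V) * V⁻¹ := by rw [Matrix.mul_assoc]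
      _ = V * Matrix.diagonal d * V⁻¹ := by rw [hEV]
  have hspec : spectrum ℂ (ETG Kc Mc Psharp Psharpᴴ) = Set.range d := by
    rw [hEdiag]
    have hu : V = (hVunit.unit : Matrix (Fin n) (Fin n) ℂ) := hVunit.unit_spec.symm
    rw [hu, ← Matrix.coe_units_inv, spectrum.units_conjugate, spectrum_diagonal]
  refine ⟨hRKPunit, ?_⟩
  unfold specRad
  rw [hspec, ← Set.range_comp]
  apply IsGreatest.csSup_eq
  constructor
  · refine ⟨⟨nc, hncn⟩, ?_⟩
    simp [hd]
  · rintro x ⟨i, rfl⟩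
    by_cases hi : (i : ℕ) < nc
    · simp only [Function.comp_apply, hd, hi, if_true]
      simpa using (norm_nonneg _)
    · have hle : (⟨nc, hncn⟩ : Fin n) ≤ i := by
        rw [Fin.le_def]
        simpa using le_of_not_gt hi
      simpa [hd, hi] using horder hle
end

section
/- Let K and M be invertible n×n complex matrices, let v̂_1,…,v̂_n be right eigenvectors and v̌_1,…,v̌_n left eigenvectors of the pencil (K,M) with common eigenvalues λ_1,…,λ_n and biorthonormalized so that v̌_i* M v̂_j = δ_ij. Fix n_c with 1 ≤ n_c < n, let P_♯ have columns v̂_1,…,v̂_{n_c} and R_♯ have rows v̌_1*,…,v̌_{n_c}*, and assume R_♯ K P_♯ is invertible. Then the two-grid error-propagation operator annihilates every coarse eigenvector: E_TG(P_♯, R_♯) v̂_j = 0 for all j ≤ n_c. -/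
open Matrix

/-- The two-grid error-propagation operator built from the first `n_c` biorthonormalized
left/right eigenvectors of the pencil `(K, M)` annihilates every coarse eigenvector:
`E_TG(P♯, R♯) v̂_j = 0` for all `j ≤ n_c`. -/
theorem two_grid_annihilates_coarse_eigenvectors
    {n : ℕ} (K M : Matrix (Fin n) (Fin n) ℂ)
    (hK : IsUnit K) (hM : IsUnit M)
    (vhat vcheck : Fin n → (Fin n → ℂ)) (lam : Fin n → ℂ)
    (hright : ∀ i, K *ᵥ vhat i = lam i • (M *ᵥ vhat i))
    (hleft : ∀ i, (star (vcheck i)) ᵥ* K = lam i • ((star (vcheck i)) ᵥ* M))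
    (hbio : ∀ i j, star (vcheck i) ⬝ᵥ (M *ᵥ vhat j) = if i = j then 1 else 0)
    (nc : ℕ) (hnc1 : 1 ≤ nc) (hncn : nc < n)
    (Psharp : Matrix (Fin n) (Fin nc) ℂ) (Rsharp : Matrix (Fin nc) (Fin n) ℂ)
    (hP : ∀ i j, Psharp i j = vhat (Fin.castLE hncn.le j) i)
    (hR : ∀ j i, Rsharp j i = star (vcheck (Fin.castLE hncn.le j) i))
    (hcoarse : IsUnit (Rsharp * K * Psharp)) :
    ∀ j : Fin n, (j : ℕ) < nc → (ETG K M Psharp Rsharp) *ᵥ vhat j = 0 := by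

  intro j hj
  set jc : Fin nc := ⟨j, hj⟩ with hjc
  have hcast : Fin.castLE hncn.le jc = j := by ext; simp [hjc]
  have hdetc : IsUnit (Rsharp * K * Psharp).det :=
    (Matrix.isUnit_iff_isUnit_det _).mp hcoarse
  have hdetM : IsUnit M.det := (Matrix.isUnit_iff_isUnit_det _).mp hM
  have hPu : Psharp *ᵥ (Pi.single jc 1 : Fin nc → ℂ) = vhat j := by
    funext i
    simp [Matrix.mulVec, dotProduct, Pi.single_apply, mul_ite, hP, hcast]
  have hRMe : Rsharp *ᵥ (M *ᵥ vhat j) = (Pi.single jc 1 : Fin nc → ℂ) := by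
    funext i
    have h1 : (Rsharp *ᵥ (M *ᵥ vhat j)) i = star (vcheck (Fin.castLE hncn.le i)) ⬝ᵥ (M *ᵥ vhat j) := by
      simp [Matrix.mulVec, dotProduct, hR]
    rw [h1, hbio, Pi.single_apply]
    have heq : (Fin.castLE hncn.le i = j) ↔ (i = jc) := by
      constructor <;> intro h
      · ext; have := Fin.ext_iff.mp h; simpa [hjc] using this
      · rw [h, hcast]
    simp [heq]
  have hRKe : Rsharp *ᵥ (K *ᵥ vhat j) = lam j • (Pi.single jc 1 : Fin nc → ℂ) := by
    rw [hright j, Matrix.mulVec_smul, hRMe]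
  have hRKPu : (Rsharp * K * Psharp) *ᵥ (Pi.single jc 1 : Fin nc → ℂ)
      = lam j • (Pi.single jc 1 : Fin nc → ℂ) := by
    rw [← Matrix.mulVec_mulVec, hPu, ← Matrix.mulVec_mulVec, hRKe]
  have hinvu : (Rsharp * K * Psharp)⁻¹ *ᵥ (lam j • (Pi.single jc 1 : Fin nc → ℂ))
      = (Pi.single jc 1 : Fin nc → ℂ) := by
    rw [← hRKPu, Matrix.mulVec_mulVec, Matrix.nonsing_inv_mul _ hdetc, Matrix.one_mulVec]
  have hMinv : M⁻¹ *ᵥ (K *ᵥ vhat j) = lam j • vhat j := by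
    rw [hright j, Matrix.mulVec_smul, Matrix.mulVec_mulVec, Matrix.nonsing_inv_mul _ hdetM,
      Matrix.one_mulVec]
  have hfix : (Psharp * (Rsharp * K * Psharp)⁻¹ * Rsharp * K) *ᵥ vhat j = vhat j := by
    rw [← Matrix.mulVec_mulVec, ← Matrix.mulVec_mulVec, ← Matrix.mulVec_mulVec, hRKe, hinvu, hPu]
  have h1 : (1 - M⁻¹ * K) *ᵥ vhat j = (1 - lam j) • vhat j := by
    rw [Matrix.sub_mulVec, Matrix.one_mulVec, ← Matrix.mulVec_mulVec, hMinv, sub_smul, one_smul]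
  show (ETG K M Psharp Rsharp) *ᵥ vhat j = 0
  unfold ETG
  rw [← Matrix.mulVec_mulVec, h1, Matrix.mulVec_smul, Matrix.sub_mulVec, Matrix.one_mulVec,
    hfix, sub_self, smul_zero]
end

section
/- Let K and M be invertible n×n complex matrices, let v̂_1,…,v̂_n be right eigenvectors and v̌_1,…,v̌_n left eigenvectors of the pencil (K,M) with pairwise common eigenvalues λ_1,…,λ_n and biorthonormalized so that v̌_i* M v̂_j = δ_ij. Fix n_c with 1 ≤ n_c < n, let P_♯ have columns v̂_1,…,v̂_{n_c} and R_♯ have rows v̌_1*,…,v̌_{n_c}*, and assume R_♯ K P_♯ is invertible. Then each remaining right eigenvector is an eigenvector of the two-grid error-propagation operator: E_TG(P_♯, R_♯) v̂_j = (1 − λ_j) v̂_j for all j with n_c < j ≤ n. -/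
open Matrix

/-- Each remaining right eigenvector (index `j > n_c`) of the biorthonormalized pencil
`(K, M)` is an eigenvector of the two-grid error-propagation operator:
`E_TG(P♯, R♯) v̂_j = (1 − λ_j) v̂_j`. -/
theorem two_grid_fine_eigenvectors
    {n : ℕ} (K M : Matrix (Fin n) (Fin n) ℂ)
    (hK : IsUnit K) (hM : IsUnit M)
    (vhat vcheck : Fin n → (Fin n → ℂ)) (lam : Fin n → ℂ)
    (hright : ∀ i, K *ᵥ vhat i = lam i • (M *ᵥ vhat i))
    (hleft : ∀ i, (star (vcheck i)) ᵥ* K = lam i • ((star (vcheck i)) ᵥ* M))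
    (hbio : ∀ i j, star (vcheck i) ⬝ᵥ (M *ᵥ vhat j) = if i = j then 1 else 0)
    (nc : ℕ) (hnc1 : 1 ≤ nc) (hncn : nc < n)
    (Psharp : Matrix (Fin n) (Fin nc) ℂ) (Rsharp : Matrix (Fin nc) (Fin n) ℂ)
    (hP : ∀ i j, Psharp i j = vhat (Fin.castLE hncn.le j) i)
    (hR : ∀ j i, Rsharp j i = star (vcheck (Fin.castLE hncn.le j) i))
    (hcoarse : IsUnit (Rsharp * K * Psharp)) :
    ∀ j : Fin n, nc ≤ (j : ℕ) →
      (ETG K M Psharp Rsharp) *ᵥ vhat j = (1 - lam j) • vhat j := by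
  intro j hj
  have hMdet : IsUnit M.det := (isUnit_iff_isUnit_det M).mp hM
  have h1 : (1 - M⁻¹ * K) *ᵥ vhat j = (1 - lam j) • vhat j := by
    rw [sub_mulVec, one_mulVec, ← mulVec_mulVec, hright j, mulVec_smul, mulVec_mulVec,
      nonsing_inv_mul M hMdet, one_mulVec, sub_smul, one_smul]
  have hRK : Rsharp *ᵥ (K *ᵥ vhat j) = 0 := by
    rw [hright j, mulVec_smul]
    ext i
    have hne : Fin.castLE hncn.le i ≠ j := by
      intro h
      have h2 : (i : ℕ) = (j : ℕ) := congrArg Fin.val h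
      have := i.isLt
      omega
    have : (Rsharp *ᵥ (M *ᵥ vhat j)) i = star (vcheck (Fin.castLE hncn.le i)) ⬝ᵥ (M *ᵥ vhat j) := by
      simp [mulVec, dotProduct, hR]
    simp only [Pi.smul_apply, Pi.zero_apply, smul_eq_mul, this, hbio, if_neg hne, mul_zero]
  unfold ETG
  rw [← mulVec_mulVec, h1, mulVec_smul, sub_mulVec, one_mulVec]
  have : (Psharp * (Rsharp * K * Psharp)⁻¹ * Rsharp * K) *ᵥ vhat j = 0 := by
    rw [← mulVec_mulVec, ← mulVec_mulVec, hRK]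
    simp
  rw [this, sub_zero]
end

section
/- Let K and M be invertible n×n complex matrices such that M⁻¹K is diagonalizable, let v̂_1,…,v̂_n be right eigenvectors (forming a basis of ℂⁿ) and v̌_1,…,v̌_n left eigenvectors of the pencil (K,M) with common eigenvalues λ_1,…,λ_n and biorthonormalized so that v̌_i* M v̂_j = δ_ij. Fix n_c with 1 ≤ n_c < n, let P_♯ have columns v̂_1,…,v̂_{n_c} and R_♯ have rows v̌_1*,…,v̌_{n_c}*, and assume R_♯ K P_♯ is invertible. Then the spectrum of the two-grid error-propagation operator is exactly the set {0} ∪ {1 − λ_j : n_c < j ≤ n}. -/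
open Matrix

/-- The spectrum of the two-grid error-propagation operator built from the first `n_c`
biorthonormalized left/right eigenvectors of a diagonalizable pencil `(K, M)` is exactly
`{0} ∪ {1 − λ_j : n_c < j ≤ n}`. -/
theorem two_grid_spectrum
    {n : ℕ} (K M : Matrix (Fin n) (Fin n) ℂ)
    (hK : IsUnit K) (hM : IsUnit M)
    (vhat vcheck : Fin n → (Fin n → ℂ)) (lam : Fin n → ℂ)
    (hright : ∀ i, K *ᵥ vhat i = lam i • (M *ᵥ vhat i))
    (hleft : ∀ i, (star (vcheck i)) ᵥ* K = lam i • ((star (vcheck i)) ᵥ* M))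
    (hbasis : LinearIndependent ℂ vhat)
    (hbio : ∀ i j, star (vcheck i) ⬝ᵥ (M *ᵥ vhat j) = if i = j then 1 else 0)
    (nc : ℕ) (hnc1 : 1 ≤ nc) (hncn : nc < n)
    (Psharp : Matrix (Fin n) (Fin nc) ℂ) (Rsharp : Matrix (Fin nc) (Fin n) ℂ)
    (hP : ∀ i j, Psharp i j = vhat (Fin.castLE hncn.le j) i)
    (hR : ∀ j i, Rsharp j i = star (vcheck (Fin.castLE hncn.le j) i))
    (hcoarse : IsUnit (Rsharp * K * Psharp)) :
    spectrum ℂ (ETG K M Psharp Rsharp) =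
      {0} ∪ (fun j => 1 - lam j) '' {j : Fin n | nc ≤ (j : ℕ)} := by
  classical
  set E := ETG K M Psharp Rsharp with hE
  set d : Fin n → ℂ := fun j => if (j : ℕ) < nc then 0 else 1 - lam j with hd
  set V : Matrix (Fin n) (Fin n) ℂ := Matrix.of fun i j => vhat j i with hV
  set W : Matrix (Fin n) (Fin n) ℂ := Matrix.of fun i k => star (vcheck i) k with hW
  have hMdet : IsUnit M.det := (Matrix.isUnit_iff_isUnit_det M).mp hM
  have hCdet : IsUnit (Rsharp * K * Psharp).det :=
    (Matrix.isUnit_iff_isUnit_det _).mp hcoarse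
  have hMinvM : M⁻¹ * M = 1 := Matrix.nonsing_inv_mul M hMdet
  have hCinvC : (Rsharp * K * Psharp)⁻¹ * (Rsharp * K * Psharp) = 1 :=
    Matrix.nonsing_inv_mul _ hCdet
  -- `V` is invertible, with left inverse `W * M`
  have hWMV : W * M * V = 1 := by
    rw [Matrix.mul_assoc]
    ext i j
    have := hbio i j
    simpa [Matrix.mul_apply, Matrix.mulVec, dotProduct, Matrix.one_apply,
      Finset.mul_sum, hW, hV] using this
  have hVunit : IsUnit V := (Matrix.isUnit_iff_isUnit_det V).mpr (Matrix.isUnit_det_of_left_inverse hWMV)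
  have hVdet : IsUnit V.det := (Matrix.isUnit_iff_isUnit_det V).mp hVunit
  -- action of the smoother on eigenvectors
  have hS : ∀ j, (1 - M⁻¹ * K) *ᵥ vhat j = (1 - lam j) • vhat j := by
    intro j
    rw [Matrix.sub_mulVec, Matrix.one_mulVec, ← Matrix.mulVec_mulVec, hright j,
      Matrix.mulVec_smul, Matrix.mulVec_mulVec, hMinvM, Matrix.one_mulVec,
      sub_smul, one_smul]
  -- action of `Rsharp * K` on eigenvectors
  have hRKv : ∀ j, (Rsharp * K) *ᵥ vhat j
      = lam j • fun i : Fin nc => if (Fin.castLE hncn.le i : Fin n) = j then (1:ℂ) else 0 := by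
    intro j
    funext i
    have h1 : ((Rsharp * K) *ᵥ vhat j) i = star (vcheck (Fin.castLE hncn.le i)) ⬝ᵥ (K *ᵥ vhat j) := by
      rw [← Matrix.mulVec_mulVec]
      simp only [Matrix.mulVec, dotProduct]
      refine Finset.sum_congr rfl fun k _ => ?_
      rw [hR]
      rfl
    rw [h1, hright j, dotProduct_smul, hbio]
    simp
  -- the key column-wise computation
  have key : ∀ j, E *ᵥ vhat j = d j • vhat j := by
    intro j
    have hEv : E *ᵥ vhat j
        = (1 - lam j) • ((1 - Psharp * (Rsharp * K * Psharp)⁻¹ * Rsharp * K) *ᵥ vhat j) := by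
      rw [hE, ETG, ← Matrix.mulVec_mulVec, hS j, Matrix.mulVec_smul]
    have hassoc : Psharp * (Rsharp * K * Psharp)⁻¹ * Rsharp * K
        = (Psharp * (Rsharp * K * Psharp)⁻¹) * (Rsharp * K) :=
      Matrix.mul_assoc _ Rsharp K
    by_cases hj : (j : ℕ) < nc
    · -- coarse eigenvector : annihilated
      set j' : Fin nc := ⟨(j : ℕ), hj⟩ with hj'
      have hcj : Fin.castLE hncn.le j' = j := by ext; rfl
      have hPe : Psharp *ᵥ Pi.single j' 1 = vhat j := by
        funext i
        rw [Matrix.mulVec_single]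
        simp [hP, hcj]
      have hsingle : (fun i : Fin nc => if (Fin.castLE hncn.le i : Fin n) = j then (1:ℂ) else 0)
          = Pi.single j' 1 := by
        funext i
        rw [Pi.single_apply]
        congr 1
        simp [Fin.ext_iff, hj']
      have hCe : (Rsharp * K * Psharp) *ᵥ (Pi.single j' 1 : Fin nc → ℂ)
          = lam j • (Pi.single j' 1 : Fin nc → ℂ) := by
        rw [← Matrix.mulVec_mulVec, hPe, hRKv j, hsingle]
      have hQ : (Psharp * (Rsharp * K * Psharp)⁻¹ * Rsharp * K) *ᵥ vhat j = vhat j := by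
        rw [hassoc, ← Matrix.mulVec_mulVec, hRKv j, hsingle, ← hCe,
          ← Matrix.mulVec_mulVec (M := Psharp), Matrix.mulVec_mulVec (M := (Rsharp * K * Psharp)⁻¹),
          hCinvC, Matrix.one_mulVec, hPe]
      rw [hEv, Matrix.sub_mulVec, Matrix.one_mulVec, hQ, sub_self, smul_zero]
      have : d j = 0 := by simp [hd, hj]
      rw [this, zero_smul]
    · -- fine eigenvector : eigenvalue `1 - lam j`
      have hz : (fun i : Fin nc => if (Fin.castLE hncn.le i : Fin n) = j then (1:ℂ) else 0)
          = 0 := by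
        funext i
        have : (Fin.castLE hncn.le i : Fin n) ≠ j := by
          intro h
          apply hj
          rw [← h]
          exact lt_of_lt_of_le i.isLt le_rfl
        simp [this]
      have hQ : (Psharp * (Rsharp * K * Psharp)⁻¹ * Rsharp * K) *ᵥ vhat j = 0 := by
        rw [hassoc, ← Matrix.mulVec_mulVec, hRKv j, hz, smul_zero, Matrix.mulVec_zero]
      rw [hEv, Matrix.sub_mulVec, Matrix.one_mulVec, hQ, sub_zero]
      have : d j = 1 - lam j := by simp [hd, hj]
      rw [this]
  -- from columns to the similarity relation
  have hEV : E * V = V * Matrix.diagonal d := by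
    ext i j
    have h1 : (E * V) i j = (E *ᵥ vhat j) i := by
      simp [Matrix.mul_apply, Matrix.mulVec, dotProduct, hV]
    rw [h1, key j, Matrix.mul_diagonal]
    simp [hV, mul_comm]
  have hEsim : E = V * Matrix.diagonal d * V⁻¹ := by
    have h2 : E * (V * V⁻¹) = V * Matrix.diagonal d * V⁻¹ := by
      rw [← Matrix.mul_assoc, hEV]
    rwa [Matrix.mul_nonsing_inv V hVdet, Matrix.mul_one] at h2
  obtain ⟨u, hu⟩ := hVunit
  have hspec : spectrum ℂ E = spectrum ℂ (Matrix.diagonal d) := by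
    rw [hEsim, ← hu, ← Matrix.coe_units_inv, spectrum.units_conjugate]
  rw [hspec, spectrum_diagonal]
  -- identify the range of `d`
  ext x
  simp only [Set.mem_range, Set.mem_union, Set.mem_singleton_iff, Set.mem_image,
    Set.mem_setOf_eq]
  constructor
  · rintro ⟨j, rfl⟩
    by_cases hj : (j : ℕ) < nc
    · left; simp [hd, hj]
    · right; exact ⟨j, Nat.le_of_not_lt hj, by simp [hd, hj]⟩
  · rintro (rfl | ⟨j, hj, rfl⟩)
    · refine ⟨⟨0, lt_of_le_of_lt (Nat.zero_le nc) hncn⟩, ?_⟩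
      simp [hd, Nat.lt_of_lt_of_le Nat.zero_lt_one hnc1]
    · exact ⟨j, by simp [hd, Nat.not_lt.mpr hj]⟩
end
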